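/- Let C ⊆ L0+ be convexly compact (convex, closed in the topology of convergence in probability, and bounded), and let (f_n)_{n∈ℕ} be a C-valued sequence converging in probability to some g ∈ C^max. Then every C-valued sequence (g_n)_{n∈ℕ} with f_n ≤ g_n a.s. for all n ∈ ℕ also converges in probability to g. -/

import Mathlib

open MeasureTheory Filter Set

noncomputable section

variable {Ω : Type*} [MeasurableSpace Ω]

/-- The nonnegative orthant `L⁰₊` of the space `L⁰` of (a.e.-equivalence classes of)
random variables over `(Ω, ℱ, P)`. -/
def L0plus (P : Measure Ω) : Set (Ω →ₘ[P] ℝ) := {f | 0 ≤ f}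

/-- The metric `(f, g) ↦ E[1 ∧ |f - g|]` inducing the topology of convergence
in probability on `L⁰`. -/
def dist0 (P : Measure Ω) (f g : Ω →ₘ[P] ℝ) : ℝ :=
  ∫ ω, min 1 |f ω - g ω| ∂P

/-- Convergence in probability of a sequence in `L⁰`. -/
def Tendsto0 (P : Measure Ω) (f : ℕ → Ω →ₘ[P] ℝ) (g : Ω →ₘ[P] ℝ) : Prop :=
  Tendsto (fun n => dist0 P (f n) g) atTop (nhds 0)

/-- Closure of a set in `L⁰` with respect to the topology of convergence in probability. -/
def closure0 (P : Measure Ω) (C : Set (Ω →ₘ[P] ℝ)) : Set (Ω →ₘ[P] ℝ) :=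
  {f | ∀ ε : ℝ, 0 < ε → ∃ g ∈ C, dist0 P f g < ε}

/-- A set of `L⁰` is closed iff it contains its closure. -/
def IsClosed0 (P : Measure Ω) (C : Set (Ω →ₘ[P] ℝ)) : Prop :=
  closure0 P C ⊆ C

/-- Boundedness (in probability) of a set `C ⊆ L⁰₊` : `lim_{ℓ → ∞} sup_{f ∈ C} P[f > ℓ] = 0`. -/
def Bounded0 (P : Measure Ω) (C : Set (Ω →ₘ[P] ℝ)) : Prop :=
  Tendsto (fun ℓ : ℝ => ⨆ f ∈ C, P {ω | ℓ < f ω}) atTop (nhds 0)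

/-- The set `C^max` of maximal elements of `C ⊆ L⁰₊` : `f ∈ C` such that `f ≤ g` a.s.
and `g ∈ C` imply `f = g` a.s. -/
def maxSet (P : Measure Ω) (C : Set (Ω →ₘ[P] ℝ)) : Set (Ω →ₘ[P] ℝ) :=
  {f | f ∈ C ∧ ∀ g ∈ C, f ≤ g → f = g}

/-- `C` is max-closed if every maximal element of its closure already belongs to `C`. -/
def MaxClosed (P : Measure Ω) (C : Set (Ω →ₘ[P] ℝ)) : Prop :=
  maxSet P (closure0 P C) ⊆ C

/-- The pairing `⟨μ, f⟩ = ∫ f dμ ∈ [0, ∞]` between a nonnegative measure `μ` and `f ∈ L⁰₊`. -/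
def pairing {P : Measure Ω} (μ : Measure Ω) (f : Ω →ₘ[P] ℝ) : ENNReal :=
  ∫⁻ ω, ENNReal.ofReal (f ω) ∂μ

/-- The set `C^osp` of outer support points of `C ⊆ L⁰₊`: points `g ∈ C^max` for which there
is a σ-finite nonnegative measure `μ ≪ P` with `0 < sup_{f ∈ C} ⟨μ, f⟩ = ⟨μ, g⟩ < ∞`;
by convention `{0}^osp = {0}`. -/
def osp (P : Measure Ω) (C : Set (Ω →ₘ[P] ℝ)) : Set (Ω →ₘ[P] ℝ) :=
  {g | g ∈ maxSet P C ∧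
    (C = {0} ∨ ∃ μ : Measure Ω, μ ≪ P ∧ SigmaFinite μ ∧
      0 < pairing μ g ∧ pairing μ g < ⊤ ∧ (⨆ f ∈ C, pairing μ f) = pairing μ g)}

/-- The solid hull of `C ⊆ L⁰₊`. -/
def solidHull (P : Measure Ω) (C : Set (Ω →ₘ[P] ℝ)) : Set (Ω →ₘ[P] ℝ) :=
  {f | f ∈ L0plus P ∧ ∃ g ∈ C, f ≤ g}

/-- A set `S ⊆ L⁰₊` is solid if `g ∈ S` and `0 ≤ f ≤ g` imply `f ∈ S`. -/
def Solid (P : Measure Ω) (S : Set (Ω →ₘ[P] ℝ)) : Prop :=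
  ∀ g ∈ S, ∀ f : Ω →ₘ[P] ℝ, 0 ≤ f → f ≤ g → f ∈ S

/-- `(g n)` is a sequence of forward convex combinations of `(f n)`. -/
def ForwardConvexComb (P : Measure Ω) (f g : ℕ → Ω →ₘ[P] ℝ) : Prop :=
  ∀ n : ℕ, g n ∈ convexHull ℝ (f '' Set.Ici n)

end

noncomputable section
namespace St9

open scoped ENNReal

variable {Ω : Type*} [MeasurableSpace Ω] {P : Measure Ω} [IsProbabilityMeasure P]

/-! ### Elementary real lemmas -/

lemma minone_abs_nonneg (t : ℝ) : 0 ≤ min 1 |t| := le_min zero_le_one (abs_nonneg t)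

lemma minone_max_nonneg (t c : ℝ) : 0 ≤ min 1 (max (t - c) 0) :=
  le_min zero_le_one (le_max_right _ _)

lemma minone_subadd (x y : ℝ) : min 1 |x + y| ≤ min 1 |x| + min 1 |y| := by
  rcases le_total 1 |x| with hx | hx
  · have h1 : min 1 |x| = 1 := min_eq_left hx
    have := minone_abs_nonneg y
    have h2 : min 1 |x + y| ≤ 1 := min_le_left _ _
    linarith
  rcases le_total 1 |y| with hy | hy
  · have h1 : min 1 |y| = 1 := min_eq_left hy
    have := minone_abs_nonneg x
    have h2 : min 1 |x + y| ≤ 1 := min_le_left _ _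
    linarith
  · calc min 1 |x + y| ≤ |x + y| := min_le_right _ _
      _ ≤ |x| + |y| := abs_add_le x y
      _ = min 1 |x| + min 1 |y| := by rw [min_eq_right hx, min_eq_right hy]

lemma minone_max_le {d s t : ℝ} (hs : 0 ≤ s) (ht : 0 ≤ t) (hd : d ≤ s + t) :
    min 1 (max d 0) ≤ min 1 s + min 1 t := by
  have h1 : min 1 (max d 0) ≤ min 1 (s + t) :=
    min_le_min le_rfl (max_le hd (by positivity))
  have h2 := minone_subadd s t
  rw [abs_of_nonneg (by positivity : (0:ℝ) ≤ s + t), abs_of_nonneg hs, abs_of_nonneg ht] at h2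
  linarith

lemma exp_identity (a b : ℝ) :
    1 - Real.exp (-((a + b) / 2)) =
      (1 - Real.exp (-a)) / 2 + (1 - Real.exp (-b)) / 2 +
        (Real.exp (-(a / 2)) - Real.exp (-(b / 2))) ^ 2 / 2 := by
  have ha : Real.exp (-a) = Real.exp (-(a / 2)) * Real.exp (-(a / 2)) := by
    rw [← Real.exp_add]; congr 1; ring
  have hb : Real.exp (-b) = Real.exp (-(b / 2)) * Real.exp (-(b / 2)) := by
    rw [← Real.exp_add]; congr 1; ring
  have hab : Real.exp (-((a + b) / 2)) = Real.exp (-(a / 2)) * Real.exp (-(b / 2)) := by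
    rw [← Real.exp_add]; congr 1; ring
  rw [ha, hb, hab]; ring

lemma sq_diff_ge {a b M β : ℝ} (ha : 0 ≤ a) (hb : 0 ≤ b) (haM : a ≤ M) (hbM : b ≤ M)
    (hβ0 : 0 ≤ β) (hβ : β ≤ |a - b|) :
    (Real.exp (-(M / 2)) * (1 - Real.exp (-(β / 2)))) ^ 2 ≤
      (Real.exp (-(a / 2)) - Real.exp (-(b / 2))) ^ 2 := by
  wlog hab : a ≤ b generalizing a b
  · have h := this hb ha hbM haM (by rwa [abs_sub_comm] at hβ) (le_of_not_ge hab)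
    calc (Real.exp (-(M / 2)) * (1 - Real.exp (-(β / 2)))) ^ 2
        ≤ (Real.exp (-(b / 2)) - Real.exp (-(a / 2))) ^ 2 := h
      _ = (Real.exp (-(a / 2)) - Real.exp (-(b / 2))) ^ 2 := by ring
  have h1 : Real.exp (-(b / 2)) = Real.exp (-(a / 2)) * Real.exp (-((b - a) / 2)) := by
    rw [← Real.exp_add]; congr 1; ring
  have h2 : Real.exp (-(a / 2)) - Real.exp (-(b / 2)) =
      Real.exp (-(a / 2)) * (1 - Real.exp (-((b - a) / 2))) := by rw [h1]; ring
  have hM : Real.exp (-(M / 2)) ≤ Real.exp (-(a / 2)) := Real.exp_le_exp.2 (by linarith)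
  have hβ' : β ≤ b - a := by
    rcases abs_cases (a - b) with ⟨he, _⟩ | ⟨he, _⟩
    · rw [he] at hβ; linarith
    · rw [he] at hβ; linarith
  have h3 : Real.exp (-((b - a) / 2)) ≤ Real.exp (-(β / 2)) := Real.exp_le_exp.2 (by linarith)
  have h4 : 0 ≤ 1 - Real.exp (-(β / 2)) := by
    have : Real.exp (-(β / 2)) ≤ 1 := Real.exp_le_one_iff.2 (by linarith)
    linarith
  rw [h2]
  refine pow_le_pow_left₀ (mul_nonneg (Real.exp_pos _).le h4) ?_ 2
  exact mul_le_mul hM (by linarith) h4 (Real.exp_pos _).le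

lemma ptwise_cauchy {a b M β η : ℝ} (ha : 0 ≤ a) (hb : 0 ≤ b) (hM : 1 ≤ M) (hβ : 0 < β)
    (hη : η = Real.exp (-(M / 2)) * (1 - Real.exp (-(β / 2)))) :
    min 1 |a - b| ≤ β + min 1 (max (a - (M - 1)) 0) + min 1 (max (b - (M - 1)) 0)
      + (Real.exp (-(a / 2)) - Real.exp (-(b / 2))) ^ 2 / η ^ 2 := by
  have hη0 : 0 < η := by
    rw [hη]
    apply mul_pos (Real.exp_pos _)
    have : Real.exp (-(β / 2)) < 1 := Real.exp_lt_one_iff.2 (by linarith)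
    linarith
  have hta := minone_max_nonneg a (M - 1)
  have htb := minone_max_nonneg b (M - 1)
  have hlast : 0 ≤ (Real.exp (-(a / 2)) - Real.exp (-(b / 2))) ^ 2 / η ^ 2 :=
    div_nonneg (sq_nonneg _) (sq_nonneg _)
  have hle1 : min 1 |a - b| ≤ 1 := min_le_left _ _
  by_cases hMa : M < a
  · have h2 : min 1 (max (a - (M - 1)) 0) = 1 :=
      min_eq_left (le_max_of_le_left (by linarith))
    linarith
  by_cases hMb : M < b
  · have h2 : min 1 (max (b - (M - 1)) 0) = 1 :=
      min_eq_left (le_max_of_le_left (by linarith))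
    linarith
  push_neg at hMa hMb
  by_cases habβ : |a - b| ≤ β
  · have : min 1 |a - b| ≤ β := le_trans (min_le_right _ _) habβ
    linarith
  push_neg at habβ
  have hsq := sq_diff_ge ha hb hMa hMb hβ.le habβ.le
  rw [← hη] at hsq
  have : (1 : ℝ) ≤ (Real.exp (-(a / 2)) - Real.exp (-(b / 2))) ^ 2 / η ^ 2 := by
    rw [le_div_iff₀ (by positivity)]
    linarith
  linarith

/-! ### Integrability and dist0 basics -/

lemma integrable_of_bound {u : Ω → ℝ} (hm : AEStronglyMeasurable u P)
    (hb : ∀ᵐ ω ∂P, |u ω| ≤ 1) : Integrable u P :=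
  (integrable_const (1 : ℝ)).mono' hm
    (by filter_upwards [hb] with ω hω; simpa [Real.norm_eq_abs] using hω)

lemma int_minone_abs (x y : Ω →ₘ[P] ℝ) :
    Integrable (fun ω => min 1 |x ω - y ω|) P := by
  apply integrable_of_bound
  · exact (measurable_const.min ((x.measurable.sub y.measurable).abs)).aestronglyMeasurable
  · refine Eventually.of_forall fun ω => ?_
    rw [abs_of_nonneg (minone_abs_nonneg _)]
    exact min_le_left _ _

lemma int_minone_max (x : Ω →ₘ[P] ℝ) (c : ℝ) :
    Integrable (fun ω => min 1 (max (x ω - c) 0)) P := by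
  apply integrable_of_bound
  · exact (measurable_const.min
      ((x.measurable.sub measurable_const).max measurable_const)).aestronglyMeasurable
  · refine Eventually.of_forall fun ω => ?_
    rw [abs_of_nonneg (minone_max_nonneg _ _)]
    exact min_le_left _ _

lemma dist0_eq (x y : Ω →ₘ[P] ℝ) : dist0 P x y = ∫ ω, min 1 |x ω - y ω| ∂P := rfl

lemma dist0_nonneg (x y : Ω →ₘ[P] ℝ) : 0 ≤ dist0 P x y :=
  integral_nonneg fun ω => minone_abs_nonneg _

lemma dist0_comm (x y : Ω →ₘ[P] ℝ) : dist0 P x y = dist0 P y x := by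
  rw [dist0_eq, dist0_eq]
  congr 1
  funext ω
  rw [abs_sub_comm]

lemma dist0_triangle (x y z : Ω →ₘ[P] ℝ) : dist0 P x z ≤ dist0 P x y + dist0 P y z := by
  rw [dist0_eq, dist0_eq, dist0_eq, ← integral_add (int_minone_abs x y) (int_minone_abs y z)]
  refine integral_mono (int_minone_abs x z) ((int_minone_abs x y).add (int_minone_abs y z))
    fun ω => ?_
  have h := minone_subadd (x ω - y ω) (y ω - z ω)
  rw [sub_add_sub_cancel] at h
  exact h

lemma dist0_tendsto_of_ae (z : ℕ → Ω →ₘ[P] ℝ) (y : Ω →ₘ[P] ℝ)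
    (hae : ∀ᵐ ω ∂P, Tendsto (fun j => z j ω) atTop (nhds (y ω))) :
    Tendsto (fun j => dist0 P (z j) y) atTop (nhds 0) := by
  have key := tendsto_integral_of_dominated_convergence (μ := P)
      (F := fun j ω => min 1 |z j ω - y ω|) (f := fun _ => (0 : ℝ)) (bound := fun _ => 1)
      (fun j => (measurable_const.min
        (((z j).measurable.sub y.measurable).abs)).aestronglyMeasurable)
      (integrable_const 1)
      (fun j => Eventually.of_forall fun ω => by
        rw [Real.norm_eq_abs, abs_of_nonneg (minone_abs_nonneg _)]
        exact min_le_left _ _)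
      (by
        filter_upwards [hae] with ω hω
        have h1 : Tendsto (fun j => |z j ω - y ω|) atTop (nhds 0) := by
          have h2 := (hω.sub (tendsto_const_nhds (x := y ω))).abs
          simpa using h2
        have h3 := (tendsto_const_nhds (x := (1 : ℝ))).min h1
        simpa using h3)
  simpa [dist0] using key

/-! ### a.e. convergence machinery -/

lemma ae_summable_minone (v w : ℕ → Ω →ₘ[P] ℝ)
    (hd : ∀ j, dist0 P (v j) (w j) ≤ (1 / 2 : ℝ) ^ j) :
    ∀ᵐ ω ∂P, Summable fun j => min 1 |v j ω - w j ω| := by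
  have hum : ∀ j, Measurable fun ω => min 1 |v j ω - w j ω| := fun j =>
    measurable_const.min (((v j).measurable.sub (w j).measurable).abs)
  have hui : ∀ j, Integrable (fun ω => min 1 |v j ω - w j ω|) P := fun j => int_minone_abs _ _
  have hkey : ∫⁻ ω, ∑' j, ENNReal.ofReal (min 1 |v j ω - w j ω|) ∂P < ⊤ := by
    rw [lintegral_tsum fun j => ((hum j).ennreal_ofReal).aemeasurable]
    have hle : ∀ j, ∫⁻ ω, ENNReal.ofReal (min 1 |v j ω - w j ω|) ∂P ≤
        ENNReal.ofReal ((1 / 2 : ℝ) ^ j) := by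
      intro j
      rw [← ofReal_integral_eq_lintegral_ofReal (hui j)
        (Eventually.of_forall fun ω => minone_abs_nonneg _)]
      exact ENNReal.ofReal_le_ofReal (hd j)
    calc ∑' j, ∫⁻ ω, ENNReal.ofReal (min 1 |v j ω - w j ω|) ∂P
        ≤ ∑' j, ENNReal.ofReal ((1 / 2 : ℝ) ^ j) := ENNReal.tsum_le_tsum hle
      _ < ⊤ := by
          rw [← ENNReal.ofReal_tsum_of_nonneg (fun j => by positivity)
            (summable_geometric_of_lt_one (by norm_num) (by norm_num))]
          exact ENNReal.ofReal_lt_top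
  have hmeas : AEMeasurable (fun ω => ∑' j, ENNReal.ofReal (min 1 |v j ω - w j ω|)) P :=
    (Measurable.ennreal_tsum fun j => (hum j).ennreal_ofReal).aemeasurable
  filter_upwards [ae_lt_top' hmeas hkey.ne] with ω hω
  have hsum := ENNReal.summable_toReal hω.ne
  refine hsum.congr fun j => ?_
  rw [ENNReal.toReal_ofReal (minone_abs_nonneg _)]

lemma ae_tendsto_of_dist0 (x : ℕ → Ω →ₘ[P] ℝ) (y : Ω →ₘ[P] ℝ)
    (hd : ∀ j, dist0 P (x j) y ≤ (1 / 2 : ℝ) ^ j) :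
    ∀ᵐ ω ∂P, Tendsto (fun j => x j ω) atTop (nhds (y ω)) := by
  filter_upwards [ae_summable_minone x (fun _ => y) hd] with ω hω
  have h0 : Tendsto (fun j => min 1 |x j ω - y ω|) atTop (nhds 0) := hω.tendsto_atTop_zero
  have hev : (fun j => |x j ω - y ω|) =ᶠ[atTop] fun j => min 1 |x j ω - y ω| := by
    filter_upwards [h0.eventually_lt_const (by norm_num : (0 : ℝ) < 1)] with j hj
    rcases le_total 1 (|x j ω - y ω|) with hc | hc
    · exfalso; rw [min_eq_left hc] at hj; linarith
    · rw [min_eq_right hc]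
  have habs : Tendsto (fun j => |x j ω - y ω|) atTop (nhds 0) := h0.congr' hev.symm
  rw [tendsto_iff_dist_tendsto_zero]
  simpa [Real.dist_eq] using habs

lemma exists_lim (z : ℕ → Ω →ₘ[P] ℝ)
    (hz : ∀ j k, j ≤ k → dist0 P (z j) (z k) ≤ (1 / 2 : ℝ) ^ j) :
    ∃ y : Ω →ₘ[P] ℝ, (∀ᵐ ω ∂P, Tendsto (fun j => z j ω) atTop (nhds (y ω))) ∧
      Tendsto (fun j => dist0 P (z j) y) atTop (nhds 0) := by
  classical
  have hsum := ae_summable_minone (fun j => z (j + 1)) (fun j => z j) (fun j => by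
    rw [dist0_comm]; exact hz j (j + 1) (Nat.le_succ j))
  have hconv : ∀ᵐ ω ∂P, ∃ l : ℝ, Tendsto (fun j => z j ω) atTop (nhds l) := by
    filter_upwards [hsum] with ω hω
    have h0 : Tendsto (fun j => min 1 |z (j + 1) ω - z j ω|) atTop (nhds 0) :=
      hω.tendsto_atTop_zero
    obtain ⟨J, hJ⟩ := eventually_atTop.1 (h0.eventually_lt_const (by norm_num : (0 : ℝ) < 1))
    have hsum2 : Summable fun i => |z (i + J + 1) ω - z (i + J) ω| := by
      have h3 := (summable_nat_add_iff J).2 hω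
      refine h3.congr fun i => ?_
      have hlt := hJ (i + J) (Nat.le_add_left _ _)
      rcases le_total 1 (|z (i + J + 1) ω - z (i + J) ω|) with hc | hc
      · exfalso; rw [min_eq_left hc] at hlt; linarith
      · rw [min_eq_right hc]
    have hcs : CauchySeq fun i => z (i + J) ω := by
      apply cauchySeq_of_dist_le_of_summable (fun i => |z (i + J + 1) ω - z (i + J) ω|)
        (fun i => ?_) hsum2
      rw [Real.dist_eq, abs_sub_comm, Nat.succ_add]
    obtain ⟨l, hl⟩ := cauchySeq_tendsto_of_complete hcs
    exact ⟨l, (tendsto_add_atTop_iff_nat J).1 hl⟩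
  set w : Ω → ℝ := fun ω =>
    if hc : ∃ l : ℝ, Tendsto (fun j => z j ω) atTop (nhds l) then hc.choose else 0 with hw
  have hwa : ∀ᵐ ω ∂P, Tendsto (fun j => z j ω) atTop (nhds (w ω)) := by
    filter_upwards [hconv] with ω hω
    rw [hw]
    simp only [dif_pos hω]
    exact hω.choose_spec
  have hwm : AEStronglyMeasurable w P :=
    aestronglyMeasurable_of_tendsto_ae atTop (fun j => (z j).aestronglyMeasurable) hwa
  refine ⟨AEEqFun.mk w hwm, ?_, ?_⟩
  · filter_upwards [hwa, AEEqFun.coeFn_mk w hwm] with ω h1 h2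
    rwa [h2]
  · apply dist0_tendsto_of_ae
    filter_upwards [hwa, AEEqFun.coeFn_mk w hwm] with ω h1 h2
    rwa [h2]

/-! ### Tail bound -/

lemma tail_bound (x : Ω →ₘ[P] ℝ) (M : ℝ) :
    ∫ ω, min 1 (max (x ω - M) 0) ∂P ≤ (P {ω | M < x ω}).toReal := by
  have hs : MeasurableSet {ω | M < x ω} := measurableSet_lt measurable_const x.measurable
  have h1 : ∀ ω, min 1 (max (x ω - M) 0) ≤ {ω | M < x ω}.indicator (fun _ => (1 : ℝ)) ω := by
    intro ω
    by_cases hω : M < x ω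
    · rw [Set.indicator_of_mem (show ω ∈ {ω' | M < x ω'} from hω)]
      exact min_le_left _ _
    · rw [Set.indicator_of_notMem (show ω ∉ {ω' | M < x ω'} from hω)]
      push_neg at hω
      rw [max_eq_right (by linarith)]
      simp
  calc ∫ ω, min 1 (max (x ω - M) 0) ∂P
      ≤ ∫ ω, {ω | M < x ω}.indicator (fun _ => (1 : ℝ)) ω ∂P :=
        integral_mono (int_minone_max x M) ((integrable_const 1).indicator hs) h1
    _ = (P {ω | M < x ω}).toReal := by
        rw [integral_indicator_const (1 : ℝ) hs]
        simp
        rfl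

/-! ### Finite convex combinations in L⁰ -/

lemma coeFn_finsum {ι : Type} (t : Finset ι) (w : ι → ℝ) (x : ι → Ω →ₘ[P] ℝ) :
    ((∑ i ∈ t, w i • x i : Ω →ₘ[P] ℝ) : Ω → ℝ) =ᵐ[P] fun ω => ∑ i ∈ t, w i * x i ω := by
  classical
  induction t using Finset.induction_on with
  | empty =>
      simp only [Finset.sum_empty]
      filter_upwards [AEEqFun.coeFn_zero (β := ℝ) (μ := P)] with ω hω
      simpa using hω
  | insert i0 t0 hni ih =>
      simp only [Finset.sum_insert hni]
      filter_upwards [AEEqFun.coeFn_add (w i0 • x i0) (∑ i ∈ t0, w i • x i),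
        AEEqFun.coeFn_smul (w i0) (x i0), ih] with ω h1 h2 h3
      rw [h1]
      simp only [Pi.add_apply]
      rw [h2, h3]
      simp [smul_eq_mul]

lemma rep_mem {F H : ℕ → Ω →ₘ[P] ℝ} {n : ℕ} {p : (Ω →ₘ[P] ℝ) × (Ω →ₘ[P] ℝ)}
    (hp : p ∈ convexHull ℝ ((fun k => (F k, H k)) '' Ici n)) :
    ∃ (ι : Type) (t : Finset ι) (w : ι → ℝ) (k : ι → ℕ),
      (∀ i ∈ t, 0 ≤ w i) ∧ (∑ i ∈ t, w i = 1) ∧ (∀ i ∈ t, n ≤ k i) ∧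
      p.1 = ∑ i ∈ t, w i • F (k i) ∧ p.2 = ∑ i ∈ t, w i • H (k i) := by
  rw [convexHull_eq] at hp
  obtain ⟨ι, t, w, z, hw0, hw1, hz, hc⟩ := hp
  classical
  have hk : ∀ i ∈ t, ∃ m, n ≤ m ∧ z i = (F m, H m) := by
    intro i hi
    obtain ⟨m, hm, hzi⟩ := hz i hi
    exact ⟨m, hm, hzi.symm⟩
  choose! k hk1 hk2 using hk
  refine ⟨ι, t, w, k, hw0, hw1, hk1, ?_, ?_⟩
  · rw [← hc, Finset.centerMass_eq_of_sum_1 _ _ hw1, Prod.fst_sum]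
    refine Finset.sum_congr rfl fun i hi => ?_
    rw [hk2 i hi]
    rfl
  · rw [← hc, Finset.centerMass_eq_of_sum_1 _ _ hw1, Prod.snd_sum]
    refine Finset.sum_congr rfl fun i hi => ?_
    rw [hk2 i hi]
    rfl

end St9
end

set_option maxHeartbeats 3200000 in
/-- Let `C ⊆ L⁰₊` be convexly compact and `(f n)` a `C`-valued sequence
converging in probability to `g ∈ C^max`. Then every `C`-valued sequence `(h n)` with
`f n ≤ h n` a.s. for all `n` also converges in probability to `g`. -/
theorem statement9 {Ω : Type*} [MeasurableSpace Ω] (P : Measure Ω) [IsProbabilityMeasure P]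
    (C : Set (Ω →ₘ[P] ℝ)) (hCL0 : C ⊆ L0plus P)
    (hconv : Convex ℝ C) (hcl : IsClosed0 P C) (hbdd : Bounded0 P C)
    (f : ℕ → Ω →ₘ[P] ℝ) (hf : ∀ n, f n ∈ C)
    (g : Ω →ₘ[P] ℝ) (hg : g ∈ maxSet P C) (hconvg : Tendsto0 P f g)
    (h : ℕ → Ω →ₘ[P] ℝ) (hhC : ∀ n, h n ∈ C) (hle : ∀ n, f n ≤ h n) :
    Tendsto0 P h g := by
  classical
  have hconvg' : Tendsto (fun n => dist0 P (f n) g) atTop (nhds 0) := hconvg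
  have hg' : g ∈ C ∧ ∀ y ∈ C, g ≤ y → g = y := hg
  show Tendsto (fun n => dist0 P (h n) g) atTop (nhds 0)
  -- It suffices to show that `dist0 P (h n) (f n) → 0`.
  suffices hmain : Tendsto (fun n => dist0 P (h n) (f n)) atTop (nhds 0) by
    have hsum0 : Tendsto (fun n => dist0 P (h n) (f n) + dist0 P (f n) g) atTop (nhds 0) := by
      simpa using hmain.add hconvg'
    exact squeeze_zero (fun n => St9.dist0_nonneg _ _)
      (fun n => St9.dist0_triangle (h n) (f n) g) hsum0
  by_contra hcon
  -- extract `ε > 0` and a subsequence along which `dist0 P (h n) (f n) ≥ ε`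
  rw [Metric.tendsto_atTop] at hcon
  push_neg at hcon
  obtain ⟨ε, hε, hfreq⟩ := hcon
  obtain ⟨φ, hφmono, hφ⟩ :=
    extraction_of_frequently_atTop (P := fun n => ε ≤ dist0 P (h n) (f n)) (frequently_atTop'.2 fun N => by
      obtain ⟨n, hn1, hn2⟩ := hfreq (N + 1)
      refine ⟨n, by omega, ?_⟩
      rwa [Real.dist_eq, sub_zero, abs_of_nonneg (St9.dist0_nonneg _ _)] at hn2)
  -- extract a further subsequence along which `f` converges a.e.
  have hφt : Tendsto (fun k => dist0 P (f (φ k)) g) atTop (nhds 0) :=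
    hconvg'.comp hφmono.tendsto_atTop
  obtain ⟨ψ, hψmono, hψ⟩ := extraction_forall_of_eventually'
    (P := fun j k => dist0 P (f (φ k)) g ≤ (1 / 2 : ℝ) ^ j) (fun j => by
      obtain ⟨N, hN⟩ := Metric.tendsto_atTop.1 hφt ((1 / 2 : ℝ) ^ j) (by positivity)
      refine ⟨N, fun k hk => ?_⟩
      have := hN k hk
      rw [Real.dist_eq, sub_zero, abs_of_nonneg (St9.dist0_nonneg _ _)] at this
      linarith)
  set F : ℕ → Ω →ₘ[P] ℝ := fun j => f (φ (ψ j)) with hFdef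
  set H : ℕ → Ω →ₘ[P] ℝ := fun j => h (φ (ψ j)) with hHdef
  have hFC : ∀ j, F j ∈ C := fun j => hf _
  have hHC : ∀ j, H j ∈ C := fun j => hhC _
  have hFH : ∀ j, ∀ᵐ ω ∂P, F j ω ≤ H j ω := fun j => AEEqFun.coeFn_le.2 (hle _)
  have hFg : ∀ᵐ ω ∂P, Tendsto (fun j => F j ω) atTop (nhds (g ω)) :=
    St9.ae_tendsto_of_dist0 F g fun j => hψ j
  have hεd : ∀ j, ε ≤ dist0 P (H j) (F j) := fun j => hφ (ψ j)
  have hCpos : ∀ x ∈ C, ∀ᵐ ω ∂P, 0 ≤ x ω := by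
    intro x hx
    have h0x : ((0 : Ω →ₘ[P] ℝ) : Ω → ℝ) ≤ᵐ[P] x := AEEqFun.coeFn_le.2 (hCL0 hx)
    filter_upwards [h0x, AEEqFun.coeFn_zero (β := ℝ) (μ := P)] with ω h1 h2
    rw [h2] at h1
    exact h1
  have hεd' : ∀ k0 : ℕ, ε ≤ ∫ ω, min 1 (H k0 ω - F k0 ω) ∂P := by
    intro k0
    have hae : (fun ω => min 1 |H k0 ω - F k0 ω|) =ᵐ[P] fun ω => min 1 (H k0 ω - F k0 ω) := by
      filter_upwards [hFH k0] with ω hω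
      rw [abs_of_nonneg (by linarith)]
    calc ε ≤ dist0 P (H k0) (F k0) := hεd k0
      _ = _ := integral_congr_ae hae
  have hXint : ∀ k0 : ℕ, Integrable (fun ω => min 1 (H k0 ω - F k0 ω)) P := by
    intro k0
    refine (St9.int_minone_abs (H k0) (F k0)).congr ?_
    filter_upwards [hFH k0] with ω hω
    rw [abs_of_nonneg (by linarith)]
  -- the forward convex hulls of the pair sequence
  set K : ℕ → Set ((Ω →ₘ[P] ℝ) × (Ω →ₘ[P] ℝ)) :=
    fun n => convexHull ℝ ((fun k => (F k, H k)) '' Ici n) with hKdef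
  have hKne : ∀ n, (K n).Nonempty :=
    fun n => ⟨(F n, H n), subset_convexHull _ _ ⟨n, le_refl n, rfl⟩⟩
  have hKsub : ∀ {n m : ℕ}, n ≤ m → K m ⊆ K n :=
    fun hnm => convexHull_mono (image_mono (Ici_subset_Ici.2 hnm))
  have hKC : ∀ n, K n ⊆ C ×ˢ C := fun n =>
    convexHull_min (by
      rintro q ⟨k, -, rfl⟩
      exact ⟨hFC k, hHC k⟩) (hconv.prod hconv)
  -- main properties of elements of `K n`
  have hrep : ∀ n (q : (Ω →ₘ[P] ℝ) × (Ω →ₘ[P] ℝ)), q ∈ K n →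
      (∀ᵐ ω ∂P, q.1 ω ≤ q.2 ω) ∧ (ε ≤ ∫ ω, min 1 |q.2 ω - q.1 ω| ∂P) ∧
      (∃ m0 : ℕ, ∀ᵐ ω ∂P, ∀ δ : ℝ, 0 ≤ δ →
        (∀ k, n ≤ k → k ≤ m0 → |F k ω - g ω| ≤ δ) → |q.1 ω - g ω| ≤ δ) := by
    intro n q hq
    obtain ⟨ι, t, w, k, hw0, hw1, hkn, h1, h2⟩ :=
      St9.rep_mem (show q ∈ convexHull ℝ ((fun k => (F k, H k)) '' Ici n) from hq)
    have hc1 : (q.1 : Ω → ℝ) =ᵐ[P] fun ω => ∑ i ∈ t, w i * F (k i) ω := by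
      rw [h1]; exact St9.coeFn_finsum t w fun i => F (k i)
    have hc2 : (q.2 : Ω → ℝ) =ᵐ[P] fun ω => ∑ i ∈ t, w i * H (k i) ω := by
      rw [h2]; exact St9.coeFn_finsum t w fun i => H (k i)
    have hFHk : ∀ᵐ ω ∂P, ∀ i ∈ t, F (k i) ω ≤ H (k i) ω := by
      rw [eventually_all_finset]
      exact fun i _ => hFH (k i)
    constructor
    · -- q.1 ≤ q.2 a.e.
      filter_upwards [hc1, hc2, hFHk] with ω e1 e2 e3
      rw [e1, e2]
      exact Finset.sum_le_sum fun i hi =>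
        mul_le_mul_of_nonneg_left (e3 i hi) (hw0 i hi)
    constructor
    · -- ε ≤ ∫ min 1 |q.2 - q.1|
      have hVle : ∀ᵐ ω ∂P,
          (∑ i ∈ t, w i * min 1 (H (k i) ω - F (k i) ω)) ≤ min 1 |q.2 ω - q.1 ω| := by
        filter_upwards [hc1, hc2, hFHk] with ω e1 e2 e3
        have hS : q.2 ω - q.1 ω = ∑ i ∈ t, w i * (H (k i) ω - F (k i) ω) := by
          rw [e1, e2, ← Finset.sum_sub_distrib]
          exact Finset.sum_congr rfl fun i _ => by ring
        refine le_min ?_ ?_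
        · calc (∑ i ∈ t, w i * min 1 (H (k i) ω - F (k i) ω))
              ≤ ∑ i ∈ t, w i * 1 := Finset.sum_le_sum fun i hi =>
                mul_le_mul_of_nonneg_left (min_le_left _ _) (hw0 i hi)
            _ = 1 := by rw [← Finset.sum_mul, hw1, one_mul]
        · have hSnn : 0 ≤ q.2 ω - q.1 ω := by
            rw [hS]
            exact Finset.sum_nonneg fun i hi =>
              mul_nonneg (hw0 i hi) (by linarith [e3 i hi])
          rw [abs_of_nonneg hSnn, hS]
          exact Finset.sum_le_sum fun i hi =>
            mul_le_mul_of_nonneg_left (min_le_right _ _) (hw0 i hi)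
      have hVint : Integrable (fun ω => ∑ i ∈ t, w i * min 1 (H (k i) ω - F (k i) ω)) P :=
        integrable_finset_sum t fun i _ => (hXint (k i)).const_mul _
      calc ε = ∑ i ∈ t, w i * ε := by rw [← Finset.sum_mul, hw1, one_mul]
        _ ≤ ∑ i ∈ t, w i * ∫ ω, min 1 (H (k i) ω - F (k i) ω) ∂P :=
            Finset.sum_le_sum fun i hi =>
              mul_le_mul_of_nonneg_left (hεd' (k i)) (hw0 i hi)
        _ = ∫ ω, (∑ i ∈ t, w i * min 1 (H (k i) ω - F (k i) ω)) ∂P := by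
            rw [integral_finset_sum t fun i _ => (hXint (k i)).const_mul _]
            exact Finset.sum_congr rfl fun i _ => (integral_const_mul _ _).symm
        _ ≤ ∫ ω, min 1 |q.2 ω - q.1 ω| ∂P :=
            integral_mono_ae hVint (St9.int_minone_abs q.2 q.1) hVle
    · -- approximation of q.1 by the F's
      refine ⟨t.sup k, ?_⟩
      filter_upwards [hc1] with ω e1
      intro δ hδ hk'
      have hgω : g ω = ∑ i ∈ t, w i * g ω := by rw [← Finset.sum_mul, hw1, one_mul]
      calc |q.1 ω - g ω| = |∑ i ∈ t, (w i * F (k i) ω - w i * g ω)| := by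
            rw [e1]; nth_rewrite 1 [hgω]; rw [← Finset.sum_sub_distrib]
        _ = |∑ i ∈ t, w i * (F (k i) ω - g ω)| := by
            congr 1; exact Finset.sum_congr rfl fun i _ => by ring
        _ ≤ ∑ i ∈ t, |w i * (F (k i) ω - g ω)| := Finset.abs_sum_le_sum_abs _ _
        _ ≤ ∑ i ∈ t, w i * δ := Finset.sum_le_sum fun i hi => by
            rw [abs_mul, abs_of_nonneg (hw0 i hi)]
            exact mul_le_mul_of_nonneg_left
              (hk' (k i) (hkn i hi) (Finset.le_sup hi)) (hw0 i hi)
        _ = δ := by rw [← Finset.sum_mul, hw1, one_mul]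
  -- the concave functional and its suprema
  set Φ : (Ω →ₘ[P] ℝ) → ℝ := fun x => ∫ ω, (1 - Real.exp (-(x ω))) ∂P with hΦdef
  have hΦint : ∀ x : Ω →ₘ[P] ℝ, (∀ᵐ ω ∂P, 0 ≤ x ω) →
      Integrable (fun ω => 1 - Real.exp (-(x ω))) P := by
    intro x hx
    apply St9.integrable_of_bound
    · exact (measurable_const.sub
        (Real.measurable_exp.comp x.measurable.neg)).aestronglyMeasurable
    · filter_upwards [hx] with ω hω
      have e1 : Real.exp (-(x ω)) ≤ 1 := Real.exp_le_one_iff.2 (by linarith)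
      have e2 : 0 < Real.exp (-(x ω)) := Real.exp_pos _
      rw [abs_le]; constructor <;> linarith
  have hΦle1 : ∀ x ∈ C, Φ x ≤ 1 := by
    intro x hx
    calc Φ x ≤ ∫ _ω, (1 : ℝ) ∂P := by
          refine integral_mono_ae (hΦint x (hCpos x hx)) (integrable_const 1) ?_
          refine Eventually.of_forall fun ω => ?_
          have := Real.exp_pos (-(x ω)); simp only []; linarith
      _ = 1 := by simp
  have hΦ0 : ∀ x ∈ C, 0 ≤ Φ x := by
    intro x hx
    refine integral_nonneg_of_ae ?_
    filter_upwards [hCpos x hx] with ω hω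
    have : Real.exp (-(x ω)) ≤ 1 := Real.exp_le_one_iff.2 (by linarith)
    simp only [Pi.zero_apply]; linarith
  set sn : ℕ → ℝ := fun n => sSup ((fun q : (Ω →ₘ[P] ℝ) × (Ω →ₘ[P] ℝ) => Φ q.2) '' K n)
    with hsndef
  have hbddA : ∀ n, BddAbove ((fun q : (Ω →ₘ[P] ℝ) × (Ω →ₘ[P] ℝ) => Φ q.2) '' K n) := by
    intro n
    refine ⟨1, ?_⟩
    rintro r ⟨q, hq, rfl⟩
    exact hΦle1 _ ((hKC n hq).2)
  have hsnmem : ∀ n (q : (Ω →ₘ[P] ℝ) × (Ω →ₘ[P] ℝ)), q ∈ K n → Φ q.2 ≤ sn n :=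
    fun n q hq => le_csSup (hbddA n) ⟨q, hq, rfl⟩
  have hsn0 : ∀ n, 0 ≤ sn n := fun n =>
    le_trans (hΦ0 _ ((hKC n (hKne n).some_mem).2)) (hsnmem n _ (hKne n).some_mem)
  have hsnanti : ∀ {n m : ℕ}, n ≤ m → sn m ≤ sn n := fun hnm =>
    csSup_le_csSup (hbddA _) ((hKne _).image _) (image_mono (hKsub hnm))
  set s : ℝ := ⨅ n, sn n with hsdef
  have hsle : ∀ n, s ≤ sn n := fun n =>
    ciInf_le ⟨0, by rintro r ⟨n, rfl⟩; exact hsn0 n⟩ n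
  have hsex : ∀ c : ℝ, 0 < c → ∃ n, sn n < s + c := fun c hc =>
    exists_lt_of_ciInf_lt (by linarith [hsle 0] : s < s + c)
  -- choose near-maximizers
  have hpex : ∀ n : ℕ, ∃ q, q ∈ K n ∧ sn n - 1 / (n + 1) < Φ q.2 := by
    intro n
    have hlt : sn n - 1 / ((n : ℝ) + 1) < sn n := by
      have : (0 : ℝ) < 1 / ((n : ℝ) + 1) := by positivity
      linarith
    obtain ⟨r, ⟨q, hq, rfl⟩, hr⟩ := exists_lt_of_lt_csSup ((hKne n).image _) hlt
    exact ⟨q, hq, hr⟩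
  choose p hpK hpΦ using hpex
  have haC : ∀ n, (p n).1 ∈ C := fun n => (hKC n (hpK n)).1
  have hyC : ∀ n, (p n).2 ∈ C := fun n => (hKC n (hpK n)).2
  have hay : ∀ n, ∀ᵐ ω ∂P, (p n).1 ω ≤ (p n).2 ω := fun n => (hrep n (p n) (hpK n)).1
  have hεay : ∀ n, ε ≤ ∫ ω, min 1 |(p n).2 ω - (p n).1 ω| ∂P :=
    fun n => (hrep n (p n) (hpK n)).2.1
  choose m0 hm0 using fun n => (hrep n (p n) (hpK n)).2.2
  -- `(p n).1 → g` a.e., hence in dist0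
  have hatend : ∀ᵐ ω ∂P, Tendsto (fun n => (p n).1 ω) atTop (nhds (g ω)) := by
    filter_upwards [ae_all_iff.2 hm0, hFg] with ω hω hFgω
    rw [Metric.tendsto_atTop]
    intro δ hδ
    obtain ⟨N, hN⟩ := Metric.tendsto_atTop.1 hFgω (δ / 2) (by linarith)
    refine ⟨N, fun n hn => ?_⟩
    have hbound := hω n (δ / 2) (by linarith) (fun k hk1 hk2 => by
      have := hN k (le_trans hn hk1)
      rw [Real.dist_eq] at this
      linarith)
    rw [Real.dist_eq]
    linarith
  have hag : Tendsto (fun n => dist0 P ((p n).1) g) atTop (nhds 0) :=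
    St9.dist0_tendsto_of_ae (fun n => (p n).1) g hatend
  -- the quantitative concavity estimate
  have hyexp : ∀ n m' : ℕ, n ≤ m' →
      ∫ ω, (Real.exp (-((p n).2 ω / 2)) - Real.exp (-((p m').2 ω / 2))) ^ 2 ∂P ≤
        2 * (sn n - s) + 2 / (n + 1) := by
    intro n m' hnm
    have hqK : (1 / 2 : ℝ) • p n + (1 / 2 : ℝ) • p m' ∈ K n := by
      have hcK : Convex ℝ (K n) := convex_convexHull ℝ _
      exact hcK (hpK n) (hKsub hnm (hpK m')) (by norm_num) (by norm_num) (by norm_num)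
    have hq2 : ((1 / 2 : ℝ) • p n + (1 / 2 : ℝ) • p m').2 =
        (1 / 2 : ℝ) • (p n).2 + (1 / 2 : ℝ) • (p m').2 := by
      simp
    have hq2coe : ∀ᵐ ω ∂P, (((1 / 2 : ℝ) • p n + (1 / 2 : ℝ) • p m').2 : Ω → ℝ) ω =
        ((p n).2 ω + (p m').2 ω) / 2 := by
      rw [hq2]
      filter_upwards [AEEqFun.coeFn_add ((1 / 2 : ℝ) • (p n).2) ((1 / 2 : ℝ) • (p m').2),
        AEEqFun.coeFn_smul (1 / 2 : ℝ) ((p n).2),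
        AEEqFun.coeFn_smul (1 / 2 : ℝ) ((p m').2)] with ω e1 e2 e3
      rw [e1]
      simp only [Pi.add_apply]
      rw [e2, e3]
      simp only [Pi.smul_apply, smul_eq_mul]
      ring
    have hyn0 := hCpos _ (hyC n)
    have hym0 := hCpos _ (hyC m')
    have hIn : Integrable (fun ω => 1 - Real.exp (-((p n).2 ω))) P := hΦint _ hyn0
    have hIm : Integrable (fun ω => 1 - Real.exp (-((p m').2 ω))) P := hΦint _ hym0
    have hIsq : Integrable
        (fun ω => (Real.exp (-((p n).2 ω / 2)) - Real.exp (-((p m').2 ω / 2))) ^ 2) P := by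
      apply St9.integrable_of_bound
      · exact (((Real.measurable_exp.comp ((p n).2.measurable.div_const 2).neg).sub
          (Real.measurable_exp.comp ((p m').2.measurable.div_const 2).neg)).pow_const
            2).aestronglyMeasurable
      · filter_upwards [hyn0, hym0] with ω e1 e2
        have a1 : Real.exp (-((p n).2 ω / 2)) ≤ 1 := Real.exp_le_one_iff.2 (by linarith)
        have a2 : 0 < Real.exp (-((p n).2 ω / 2)) := Real.exp_pos _
        have b1 : Real.exp (-((p m').2 ω / 2)) ≤ 1 := Real.exp_le_one_iff.2 (by linarith)
        have b2 : 0 < Real.exp (-((p m').2 ω / 2)) := Real.exp_pos _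
        rw [abs_of_nonneg (sq_nonneg _)]
        nlinarith
    have hΦq : Φ (((1 / 2 : ℝ) • p n + (1 / 2 : ℝ) • p m').2) ≤ sn n := hsnmem n _ hqK
    have hΦqeq : Φ (((1 / 2 : ℝ) • p n + (1 / 2 : ℝ) • p m').2) =
        Φ ((p n).2) / 2 + Φ ((p m').2) / 2 +
          (∫ ω, (Real.exp (-((p n).2 ω / 2)) - Real.exp (-((p m').2 ω / 2))) ^ 2 ∂P) / 2 := by
      have hcongr : (fun ω => 1 - Real.exp (-((((1 / 2 : ℝ) • p n + (1 / 2 : ℝ) • p m').2 : Ω → ℝ) ω)))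
          =ᵐ[P] fun ω => (1 - Real.exp (-((p n).2 ω))) / 2 + (1 - Real.exp (-((p m').2 ω))) / 2 +
            (Real.exp (-((p n).2 ω / 2)) - Real.exp (-((p m').2 ω / 2))) ^ 2 / 2 := by
        filter_upwards [hq2coe] with ω e1
        rw [e1]
        exact St9.exp_identity ((p n).2 ω) ((p m').2 ω)
      have hIa : Integrable (fun ω => (1 - Real.exp (-((p n).2 ω))) / 2 +
          (1 - Real.exp (-((p m').2 ω))) / 2) P := (hIn.div_const 2).add (hIm.div_const 2)
      show (∫ ω, (1 - Real.exp (-((((1 / 2 : ℝ) • p n + (1 / 2 : ℝ) • p m').2 : Ω → ℝ) ω))) ∂P) = _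
      rw [integral_congr_ae hcongr, integral_add hIa (hIsq.div_const 2),
        integral_add (hIn.div_const 2) (hIm.div_const 2),
        integral_div, integral_div, integral_div]
    have hΦn := hpΦ n
    have hΦm := hpΦ m'
    have hsm := hsle m'
    have hfrac : 1 / ((m' : ℝ) + 1) ≤ 1 / ((n : ℝ) + 1) := by
      apply one_div_le_one_div_of_le (by positivity)
      have : (n : ℝ) ≤ (m' : ℝ) := Nat.cast_le.2 hnm
      linarith
    have hsn_ge : s ≤ sn n := hsle n
    have h7 : 2 / ((n : ℝ) + 1) = 2 * (1 / ((n : ℝ) + 1)) := by ring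
    linarith
  -- boundedness in probability
  have hbC : ∀ γ : ℝ, 0 < γ → ∃ M : ℝ, 1 ≤ M ∧
      ∀ x ∈ C, (P {ω | M - 1 < x ω}).toReal ≤ γ := by
    intro γ hγ
    have hbdd' : Tendsto (fun ℓ : ℝ => ⨆ x ∈ C, P {ω | ℓ < x ω}) atTop (nhds 0) := hbdd
    have hev := hbdd'.eventually_lt_const (ENNReal.ofReal_pos.2 hγ)
    obtain ⟨L, hL⟩ := eventually_atTop.1 hev
    refine ⟨max L 0 + 1, by nlinarith [le_max_right L (0:ℝ)], ?_⟩
    intro x hx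
    have hML : max L 0 + 1 - 1 = max L 0 := by ring
    have hsup := hL (max L 0) (le_max_left _ _)
    have hmem : P {ω | max L 0 < x ω} ≤ ⨆ x ∈ C, P {ω | max L 0 < x ω} :=
      le_iSup₂ (f := fun x' (_ : x' ∈ C) => P {ω | max L 0 < x' ω}) x hx
    rw [hML]
    exact ENNReal.toReal_le_of_le_ofReal hγ.le (le_of_lt (lt_of_le_of_lt hmem hsup))
  -- the Cauchy property of the near-maximizers
  have hcauchy : ∀ γ : ℝ, 0 < γ → ∃ N : ℕ, ∀ n m' : ℕ, N ≤ n → n ≤ m' →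
      dist0 P ((p n).2) ((p m').2) ≤ γ := by
    intro γ hγ
    obtain ⟨M, hM1, hMtail⟩ := hbC (γ / 4) (by linarith)
    set β : ℝ := γ / 4 with hβdef
    have hβpos : 0 < β := by rw [hβdef]; linarith
    set η : ℝ := Real.exp (-(M / 2)) * (1 - Real.exp (-(β / 2))) with hηdef
    have hη0 : 0 < η := by
      rw [hηdef]
      apply mul_pos (Real.exp_pos _)
      have : Real.exp (-(β / 2)) < 1 := Real.exp_lt_one_iff.2 (by linarith)
      linarith
    have hη2pos : 0 < η ^ 2 := by positivity
    obtain ⟨n₀, hn₀⟩ := hsex (η ^ 2 * γ / 16) (by positivity)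
    obtain ⟨N₂, hN₂⟩ := exists_nat_gt (16 / (η ^ 2 * γ))
    refine ⟨max n₀ N₂, fun n m' hn hnm => ?_⟩
    have h1 : sn n - s ≤ η ^ 2 * γ / 16 := by
      have := hsnanti (le_trans (le_max_left _ _) hn)
      linarith [hsle n]
    have h2 : 2 / ((n : ℝ) + 1) ≤ η ^ 2 * γ / 8 := by
      have hN2n : (N₂ : ℝ) ≤ (n : ℝ) := Nat.cast_le.2 (le_trans (le_max_right _ _) hn)
      have hlt : 16 / (η ^ 2 * γ) < (n : ℝ) + 1 := by linarith
      have hpos : (0 : ℝ) < η ^ 2 * γ := by positivity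
      rw [div_lt_iff₀ hpos] at hlt
      rw [div_le_div_iff₀ (by positivity : (0 : ℝ) < (n : ℝ) + 1) (by norm_num : (0 : ℝ) < 8)]
      nlinarith
    have hsqb : ∫ ω, (Real.exp (-((p n).2 ω / 2)) - Real.exp (-((p m').2 ω / 2))) ^ 2 ∂P ≤
        η ^ 2 * γ / 4 := le_trans (hyexp n m' hnm) (by linarith)
    -- pointwise bound
    have hptw : ∀ᵐ ω ∂P, min 1 |(p n).2 ω - (p m').2 ω| ≤
        β + min 1 (max ((p n).2 ω - (M - 1)) 0) + min 1 (max ((p m').2 ω - (M - 1)) 0) +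
          (Real.exp (-((p n).2 ω / 2)) - Real.exp (-((p m').2 ω / 2))) ^ 2 / η ^ 2 := by
      filter_upwards [hCpos _ (hyC n), hCpos _ (hyC m')] with ω e1 e2
      exact St9.ptwise_cauchy e1 e2 hM1 hβpos hηdef
    have hIsq : Integrable
        (fun ω => (Real.exp (-((p n).2 ω / 2)) - Real.exp (-((p m').2 ω / 2))) ^ 2) P := by
      apply St9.integrable_of_bound
      · exact (((Real.measurable_exp.comp ((p n).2.measurable.div_const 2).neg).sub
          (Real.measurable_exp.comp ((p m').2.measurable.div_const 2).neg)).pow_const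
            2).aestronglyMeasurable
      · filter_upwards [hCpos _ (hyC n), hCpos _ (hyC m')] with ω e1 e2
        have a1 : Real.exp (-((p n).2 ω / 2)) ≤ 1 := Real.exp_le_one_iff.2 (by linarith)
        have a2 : 0 < Real.exp (-((p n).2 ω / 2)) := Real.exp_pos _
        have b1 : Real.exp (-((p m').2 ω / 2)) ≤ 1 := Real.exp_le_one_iff.2 (by linarith)
        have b2 : 0 < Real.exp (-((p m').2 ω / 2)) := Real.exp_pos _
        rw [abs_of_nonneg (sq_nonneg _)]
        nlinarith
    have hT1 := St9.int_minone_max ((p n).2) (M - 1)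
    have hT2 := St9.int_minone_max ((p m').2) (M - 1)
    have hIb1 : Integrable (fun ω => β + min 1 (max ((p n).2 ω - (M - 1)) 0)) P :=
      (integrable_const β).add hT1
    have hIb2 : Integrable (fun ω => β + min 1 (max ((p n).2 ω - (M - 1)) 0) +
        min 1 (max ((p m').2 ω - (M - 1)) 0)) P := hIb1.add hT2
    have hIb3 : Integrable (fun ω => β + min 1 (max ((p n).2 ω - (M - 1)) 0) +
        min 1 (max ((p m').2 ω - (M - 1)) 0) +
        (Real.exp (-((p n).2 ω / 2)) - Real.exp (-((p m').2 ω / 2))) ^ 2 / η ^ 2) P :=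
      hIb2.add (hIsq.div_const (η ^ 2))
    have hint := integral_mono_ae (St9.int_minone_abs ((p n).2) ((p m').2)) hIb3 hptw
    rw [integral_add hIb2 (hIsq.div_const (η ^ 2)),
      integral_add hIb1 hT2,
      integral_add (integrable_const β) hT1, integral_const, integral_div] at hint
    have htail1 : ∫ ω, min 1 (max ((p n).2 ω - (M - 1)) 0) ∂P ≤ γ / 4 :=
      le_trans (St9.tail_bound ((p n).2) (M - 1)) (hMtail _ (hyC n))
    have htail2 : ∫ ω, min 1 (max ((p m').2 ω - (M - 1)) 0) ∂P ≤ γ / 4 :=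
      le_trans (St9.tail_bound ((p m').2) (M - 1)) (hMtail _ (hyC m'))
    have hlast : (∫ ω, (Real.exp (-((p n).2 ω / 2)) - Real.exp (-((p m').2 ω / 2))) ^ 2 ∂P) /
        η ^ 2 ≤ γ / 4 := by
      rw [div_le_iff₀ hη2pos]
      nlinarith
    have hμuniv : (P.real univ • β) = β := by
      simp [measure_univ]
    rw [St9.dist0_eq]
    rw [hμuniv] at hint
    linarith [hint]
  -- extract a rapidly Cauchy subsequence
  choose Nf hNf using fun j : ℕ => hcauchy ((1 / 2 : ℝ) ^ j) (by positivity)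
  set Mj : ℕ → ℕ := fun j => j + (Finset.range (j + 1)).sup Nf with hMjdef
  have hMjmono : Monotone Mj := by
    intro j1 j2 hj
    exact add_le_add hj (Finset.sup_mono (Finset.range_subset_range.2 (by omega)))
  have hMjge : ∀ j, Nf j ≤ Mj j := fun j =>
    le_trans (Finset.le_sup (Finset.mem_range.2 (Nat.lt_succ_self j))) (Nat.le_add_left _ _)
  have hMjid : ∀ j, j ≤ Mj j := fun j => Nat.le_add_right _ _
  have hzc : ∀ j j', j ≤ j' → dist0 P ((p (Mj j)).2) ((p (Mj j')).2) ≤ (1 / 2 : ℝ) ^ j :=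
    fun j j' hjj => hNf j (Mj j) (Mj j') (hMjge j) (hMjmono hjj)
  obtain ⟨ylim, hylimae, hylimd⟩ := St9.exists_lim (fun j => (p (Mj j)).2) hzc
  -- the limit lies in C
  have hylimC : ylim ∈ C := by
    apply hcl
    show ∀ ε' : ℝ, 0 < ε' → ∃ c ∈ C, dist0 P ylim c < ε'
    intro ε' hε'
    obtain ⟨N, hN⟩ := Metric.tendsto_atTop.1 hylimd ε' hε'
    have := hN N le_rfl
    rw [Real.dist_eq, sub_zero, abs_of_nonneg (St9.dist0_nonneg _ _)] at this
    exact ⟨(p (Mj N)).2, hyC _, by rwa [St9.dist0_comm]⟩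
  -- `g ≤ ylim`
  have hMjtend : Tendsto Mj atTop atTop := tendsto_atTop_mono hMjid tendsto_id
  have hagM : Tendsto (fun j => dist0 P ((p (Mj j)).1) g) atTop (nhds 0) :=
    hag.comp hMjtend
  have hgylim : g ≤ ylim := by
    rw [← AEEqFun.coeFn_le]
    have hTint : Integrable (fun ω => min 1 (max (g ω - ylim ω) 0)) P := by
      apply St9.integrable_of_bound
      · exact (measurable_const.min
          ((g.measurable.sub ylim.measurable).max measurable_const)).aestronglyMeasurable
      · refine Eventually.of_forall fun ω => ?_
        rw [abs_of_nonneg (St9.minone_max_nonneg _ _)]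
        exact min_le_left _ _
    have hTnn : 0 ≤ ∫ ω, min 1 (max (g ω - ylim ω) 0) ∂P :=
      integral_nonneg fun ω => St9.minone_max_nonneg _ _
    have hTle : ∀ j, (∫ ω, min 1 (max (g ω - ylim ω) 0) ∂P) ≤
        dist0 P ((p (Mj j)).1) g + dist0 P ((p (Mj j)).2) ylim := by
      intro j
      have hptw : ∀ᵐ ω ∂P, min 1 (max (g ω - ylim ω) 0) ≤
          min 1 |(p (Mj j)).1 ω - g ω| + min 1 |(p (Mj j)).2 ω - ylim ω| := by
        filter_upwards [hay (Mj j)] with ω e1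
        refine St9.minone_max_le (abs_nonneg _) (abs_nonneg _) ?_
        have d1 : g ω - (p (Mj j)).1 ω ≤ |(p (Mj j)).1 ω - g ω| := by
          rw [abs_sub_comm]; exact le_abs_self _
        have d2 : (p (Mj j)).2 ω - ylim ω ≤ |(p (Mj j)).2 ω - ylim ω| := le_abs_self _
        linarith
      have hIsum : Integrable (fun ω => min 1 |(p (Mj j)).1 ω - g ω| +
          min 1 |(p (Mj j)).2 ω - ylim ω|) P :=
        (St9.int_minone_abs _ _).add (St9.int_minone_abs _ _)
      have := integral_mono_ae hTint hIsum hptw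
      rwa [integral_add (St9.int_minone_abs ((p (Mj j)).1) g)
        (St9.int_minone_abs ((p (Mj j)).2) ylim)] at this
    have hlim : Tendsto (fun j => dist0 P ((p (Mj j)).1) g + dist0 P ((p (Mj j)).2) ylim)
        atTop (nhds 0) := by simpa using hagM.add hylimd
    have hT0 : (∫ ω, min 1 (max (g ω - ylim ω) 0) ∂P) ≤ 0 :=
      ge_of_tendsto hlim (Eventually.of_forall hTle)
    have hTeq : (∫ ω, min 1 (max (g ω - ylim ω) 0) ∂P) = 0 := le_antisymm hT0 hTnn
    have hae0 := (integral_eq_zero_iff_of_nonneg_ae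
      (Eventually.of_forall fun ω => St9.minone_max_nonneg _ _) hTint).1 hTeq
    filter_upwards [hae0] with ω hω
    by_contra hc
    push_neg at hc
    have h1 : 0 < max (g ω - ylim ω) 0 := lt_max_of_lt_left (by linarith)
    have h2 : 0 < min 1 (max (g ω - ylim ω) 0) := lt_min one_pos h1
    have h3 : min 1 (max (g ω - ylim ω) 0) = 0 := hω
    linarith
  -- maximality forces ylim = g, contradiction with ε-separation
  have hgeq : g = ylim := hg'.2 ylim hylimC hgylim
  have hfin : ∀ j, ε ≤ dist0 P ((p (Mj j)).2) ylim + dist0 P ((p (Mj j)).1) g := by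
    intro j
    calc ε ≤ ∫ ω, min 1 |(p (Mj j)).2 ω - (p (Mj j)).1 ω| ∂P := hεay (Mj j)
      _ = dist0 P ((p (Mj j)).2) ((p (Mj j)).1) := (St9.dist0_eq _ _).symm
      _ ≤ dist0 P ((p (Mj j)).2) ylim + dist0 P ylim ((p (Mj j)).1) :=
          St9.dist0_triangle _ _ _
      _ = dist0 P ((p (Mj j)).2) ylim + dist0 P ((p (Mj j)).1) g := by
          have hx : dist0 P ylim ((p (Mj j)).1) = dist0 P ((p (Mj j)).1) g := by
            rw [St9.dist0_comm ylim ((p (Mj j)).1), hgeq]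
          rw [hx]
  have hlim2 : Tendsto (fun j => dist0 P ((p (Mj j)).2) ylim + dist0 P ((p (Mj j)).1) g)
      atTop (nhds 0) := by simpa using hylimd.add hagM
  have : ε ≤ 0 := ge_of_tendsto hlim2 (Eventually.of_forall hfin)
  linarith
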